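/- arXiv:0807.4490 — 4 statements merged into one kernel-verified Lean document; each statement's English description precedes it below -/
import Mathlib

section
/- Quantum discord is bounded above by the entropy of the measured subsystem: D(A,B) ≤ H(ρ_A). -/
open Matrix Kronecker ComplexOrder

/-- Von Neumann entropy of a (Hermitian) matrix: `-Σ λ_i log λ_i` over its eigenvalues. -/
noncomputable def vnEntropy {n : Type*} [Fintype n] [DecidableEq n]
    (A : Matrix n n ℂ) : ℝ :=
  if h : A.IsHermitian then ∑ i, Real.negMulLog (h.eigenvalues i) else 0

/-- Partial trace over the first subsystem. -/
noncomputable def ptrFst {α β : Type*} [Fintype α]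
    (ρ : Matrix (α × β) (α × β) ℂ) : Matrix β β ℂ :=
  Matrix.of fun j j' => ∑ i, ρ (i, j) (i, j')

/-- Partial trace over the second subsystem. -/
noncomputable def ptrSnd {α β : Type*} [Fintype β]
    (ρ : Matrix (α × β) (α × β) ℂ) : Matrix α α ℂ :=
  Matrix.of fun i i' => ∑ j, ρ (i, j) (i', j)

/-- Outcome probability `p = tr(ρ (P ⊗ I))` for a measurement operator `P` on the
first subsystem. -/
noncomputable def measProb {α β : Type*} [Fintype α] [Fintype β] [DecidableEq α] [DecidableEq β]
    (ρ : Matrix (α × β) (α × β) ℂ) (P : Matrix α α ℂ) : ℝ :=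
  ((ρ * (P ⊗ₖ (1 : Matrix β β ℂ))).trace).re

/-- Conditional post-measurement state `ρ_{B|P} = tr_A((P⊗I) ρ (P⊗I)) / p`. -/
noncomputable def postState {α β : Type*} [Fintype α] [Fintype β] [DecidableEq α] [DecidableEq β]
    (ρ : Matrix (α × β) (α × β) ℂ) (P : Matrix α α ℂ) : Matrix β β ℂ :=
  (measProb ρ P)⁻¹ •
    ptrFst ((P ⊗ₖ (1 : Matrix β β ℂ)) * ρ * (P ⊗ₖ (1 : Matrix β β ℂ)))

/-- A complete projective measurement on a system `α`: a complete set of mutually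
orthogonal Hermitian projectors summing to the identity. -/
structure ProjMeas (α : Type*) [Fintype α] [DecidableEq α] where
  P : α → Matrix α α ℂ
  herm : ∀ j, (P j).IsHermitian
  idem : ∀ j, P j * P j = P j
  orth : ∀ j k, j ≠ k → P j * P k = 0
  comp : ∑ j, P j = 1

/-- Measured conditional entropy: the minimum over complete projective measurements on `A`
of `Σ_j p_j H(ρ_{B|j})`. -/
noncomputable def condEntA {α β : Type*} [Fintype α] [Fintype β] [DecidableEq α] [DecidableEq β]
    (ρ : Matrix (α × β) (α × β) ℂ) : ℝ :=
  ⨅ m : ProjMeas α, ∑ j, measProb ρ (m.P j) * vnEntropy (postState ρ (m.P j))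

/-- Quantum discord with measurement on the first subsystem `A`:
`D(A,B) = H(ρ_A) − H(ρ_{AB}) + min_Π Σ_j p_j H(ρ_{B|j})`. -/
noncomputable def discordA {α β : Type*} [Fintype α] [Fintype β] [DecidableEq α] [DecidableEq β]
    (ρ : Matrix (α × β) (α × β) ℂ) : ℝ :=
  vnEntropy (ptrSnd ρ) - vnEntropy ρ + condEntA ρ


/-! ### Auxiliary lemmas -/

section AuxLemmas

/-- sub-probability Jensen inequality for `negMulLog`. -/
lemma jensen_negMulLog {ι : Type*} [Fintype ι] (w x : ι → ℝ)
    (hw : ∀ i, 0 ≤ w i) (hw1 : ∑ i, w i ≤ 1) (hx : ∀ i, 0 ≤ x i) :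
    ∑ i, w i * Real.negMulLog (x i) ≤ Real.negMulLog (∑ i, w i * x i) := by
  have h := Real.concaveOn_negMulLog.map_add_sum_le (t := Finset.univ)
    (w := w) (p := x) (v := 1 - ∑ i, w i) (q := 0)
    (fun i _ => hw i) (by ring) (fun i _ => hx i) (by linarith) (by exact Set.mem_Ici.2 le_rfl)
  simpa [Real.negMulLog_zero, smul_eq_mul] using h

/-- entries of a hermitian matrix via the spectral theorem. -/
lemma herm_entries {n : Type*} [Fintype n] [DecidableEq n] {A : Matrix n n ℂ}
    (hA : A.IsHermitian) (x y : n) :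
    A x y = ∑ k, (hA.eigenvalues k : ℂ) * ((hA.eigenvectorUnitary : Matrix n n ℂ) x k *
      (starRingEnd ℂ) ((hA.eigenvectorUnitary : Matrix n n ℂ) y k)) := by
  conv_lhs => rw [hA.spectral_theorem, Unitary.conjStarAlgAut_apply]
  rw [Matrix.mul_apply]
  simp only [Matrix.mul_apply, Matrix.diagonal_apply, Matrix.star_apply, mul_ite, mul_zero,
    Finset.sum_ite_eq', Finset.mem_univ, if_pos]
  refine Finset.sum_congr rfl fun k _ => ?_
  simp only [Function.comp_apply, RCLike.star_def, RCLike.ofReal_alg, Complex.real_smul, mul_one]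
  ring

/-- trace equals sum of eigenvalues. -/
lemma herm_trace {n : Type*} [Fintype n] [DecidableEq n] {A : Matrix n n ℂ}
    (hA : A.IsHermitian) : A.trace = ∑ k, (hA.eigenvalues k : ℂ) := by
  conv_lhs => rw [hA.spectral_theorem, Unitary.conjStarAlgAut_apply]
  rw [Matrix.trace_mul_cycle]
  rw [show (star (hA.eigenvectorUnitary : Matrix n n ℂ)) * (hA.eigenvectorUnitary : Matrix n n ℂ)
    = 1 from Matrix.mem_unitaryGroup_iff'.mp (hA.eigenvectorUnitary).2]
  simp [Matrix.trace_diagonal]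

/-- Entropy of a matrix written as an unnormalized pure ensemble is at most the
entropy of the weights. -/
lemma vnEntropy_le_of_ensemble {n ι : Type*} [Fintype n] [DecidableEq n] [Fintype ι]
    (u : ι → n → ℂ) (σ : Matrix n n ℂ)
    (hσ : ∀ x y, σ x y = ∑ i, u i x * (starRingEnd ℂ) (u i y)) :
    vnEntropy σ ≤ ∑ i, Real.negMulLog (∑ x, Complex.normSq (u i x)) := by
  classical
  have hH : σ.IsHermitian := by
    ext x y
    simp only [Matrix.conjTranspose_apply, hσ, star_sum, star_mul', RCLike.star_def,
      Complex.conj_conj]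
    exact Finset.sum_congr rfl fun i _ => mul_comm _ _
  set U : Matrix n n ℂ := (hH.eigenvectorUnitary : Matrix n n ℂ) with hU
  set μ : n → ℝ := hH.eigenvalues with hμdef
  have hdiag : star U * σ * U = Matrix.diagonal (RCLike.ofReal ∘ μ) :=
    by
      have h := hH.conjStarAlgAut_star_eigenvectorUnitary
      rwa [Unitary.conjStarAlgAut_star_apply] at h
  set g : ι → n → ℂ := fun i l => ∑ x, (starRingEnd ℂ) (U x l) * u i x with hg
  have F2 : ∀ l l', ∑ i, (starRingEnd ℂ) (g i l) * g i l'
      = if l' = l then ((μ l' : ℝ) : ℂ) else 0 := by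
    intro l l'
    have hrhs := congrFun (congrFun hdiag l') l
    rw [Matrix.diagonal_apply] at hrhs
    have hexp : (star U * σ * U) l' l
        = ∑ x, ∑ y, (starRingEnd ℂ) (U y l') * σ y x * U x l := by
      simp only [Matrix.mul_apply, Matrix.star_apply, RCLike.star_def, Finset.sum_mul]
    rw [hexp] at hrhs
    calc ∑ i, (starRingEnd ℂ) (g i l) * g i l'
        = ∑ i, (∑ x, U x l * (starRingEnd ℂ) (u i x)) * (∑ y, (starRingEnd ℂ) (U y l') * u i y) := by
          refine Finset.sum_congr rfl fun i _ => ?_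
          simp only [hg, map_sum, _root_.map_mul, Complex.conj_conj]
      _ = ∑ i, ∑ x, ∑ y, U x l * (starRingEnd ℂ) (u i x) * ((starRingEnd ℂ) (U y l') * u i y) := by
          refine Finset.sum_congr rfl fun i _ => ?_
          rw [Finset.sum_mul_sum]
      _ = ∑ x, ∑ y, ∑ i, U x l * (starRingEnd ℂ) (u i x) * ((starRingEnd ℂ) (U y l') * u i y) := by
          rw [Finset.sum_comm]
          exact Finset.sum_congr rfl fun x _ => Finset.sum_comm
      _ = ∑ x, ∑ y, (starRingEnd ℂ) (U y l') * σ y x * U x l := by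
          refine Finset.sum_congr rfl fun x _ => Finset.sum_congr rfl fun y _ => ?_
          rw [hσ y x, Finset.mul_sum, Finset.sum_mul]
          exact Finset.sum_congr rfl fun i _ => by ring
      _ = if l' = l then ((μ l' : ℝ) : ℂ) else 0 := by simpa using hrhs
  have hμc : ∀ l, (μ l : ℂ) = ∑ i, (Complex.normSq (g i l) : ℂ) := by
    intro l
    have h := F2 l l
    rw [if_pos rfl] at h
    rw [← h]
    refine Finset.sum_congr rfl fun i _ => ?_
    rw [mul_comm, Complex.mul_conj]
  have hμr : ∀ l, μ l = ∑ i, Complex.normSq (g i l) := by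
    intro l
    have := hμc l
    exact_mod_cast this
  have hμ0 : ∀ l, 0 ≤ μ l := fun l => by
    rw [hμr l]; exact Finset.sum_nonneg fun i _ => Complex.normSq_nonneg _
  have hgz : ∀ i l, μ l = 0 → g i l = 0 := by
    intro i l hl
    rw [hμr l] at hl
    have := (Finset.sum_eq_zero_iff_of_nonneg (fun i _ => Complex.normSq_nonneg (g i l))).mp hl
      i (Finset.mem_univ i)
    exact Complex.normSq_eq_zero.mp this
  have hUU : U * star U = 1 := Matrix.mem_unitaryGroup_iff.mp (hH.eigenvectorUnitary).2
  have F1 : ∀ i, ∑ l, Complex.normSq (g i l) = ∑ x, Complex.normSq (u i x) := by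
    intro i
    have hc : ∑ l, (Complex.normSq (g i l) : ℂ) = ∑ x, (Complex.normSq (u i x) : ℂ) := by
      calc ∑ l, (Complex.normSq (g i l) : ℂ) = ∑ l, g i l * (starRingEnd ℂ) (g i l) := by
            refine Finset.sum_congr rfl fun l _ => (Complex.mul_conj _).symm
        _ = ∑ l, ∑ x, ∑ y, ((starRingEnd ℂ) (U x l) * u i x) * (U y l * (starRingEnd ℂ) (u i y)) := by
            refine Finset.sum_congr rfl fun l _ => ?_
            simp only [hg, map_sum, _root_.map_mul, Complex.conj_conj]
            rw [Finset.sum_mul_sum]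
        _ = ∑ x, ∑ y, (∑ l, U y l * (starRingEnd ℂ) (U x l)) * (u i x * (starRingEnd ℂ) (u i y)) := by
            rw [Finset.sum_comm]
            refine Finset.sum_congr rfl fun x _ => ?_
            rw [Finset.sum_comm]
            refine Finset.sum_congr rfl fun y _ => ?_
            rw [Finset.sum_mul]
            refine Finset.sum_congr rfl fun l _ => ?_
            ring
        _ = ∑ x, ∑ y, (if y = x then (1:ℂ) else 0) * (u i x * (starRingEnd ℂ) (u i y)) := by
            refine Finset.sum_congr rfl fun x _ => Finset.sum_congr rfl fun y _ => ?_
            congr 1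
            have := congrFun (congrFun hUU y) x
            simpa [Matrix.mul_apply, Matrix.star_apply, Matrix.one_apply] using this
        _ = ∑ x, (Complex.normSq (u i x) : ℂ) := by
            refine Finset.sum_congr rfl fun x _ => ?_
            simp only [ite_mul, one_mul, zero_mul]
            rw [Finset.sum_ite_eq' Finset.univ x]
            simp [Complex.mul_conj]
    exact_mod_cast hc
  set c : ι → n → ℂ := fun i l => g i l * ((Real.sqrt (μ l))⁻¹ : ℝ) with hc
  have hnormc : ∀ i l, Complex.normSq (c i l) = Complex.normSq (g i l) / μ l := by
    intro i l
    rcases eq_or_lt_of_le (hμ0 l) with h | h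
    · rw [hc]
      simp [← h, hgz i l h.symm]
    · simp only [hc, Complex.normSq_mul, Complex.normSq_ofReal]
      rw [div_eq_mul_inv]
      congr 1
      rw [← Real.sqrt_inv]
      exact Real.mul_self_sqrt (inv_nonneg.mpr (hμ0 l))
  have hccdiag : ∀ l l', ∑ i', (starRingEnd ℂ) (c i' l) * c i' l'
      = if l' = l then ((if μ l' = 0 then (0:ℝ) else 1) : ℂ) else 0 := by
    intro l l'
    have h : ∑ i', (starRingEnd ℂ) (c i' l) * c i' l'
        = (∑ i', (starRingEnd ℂ) (g i' l) * g i' l') * (((Real.sqrt (μ l))⁻¹ : ℝ) : ℂ)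
          * (((Real.sqrt (μ l'))⁻¹ : ℝ) : ℂ) := by
      rw [Finset.sum_mul, Finset.sum_mul]
      refine Finset.sum_congr rfl fun i' _ => ?_
      simp only [hc, _root_.map_mul, Complex.conj_ofReal]
      ring
    rw [h, F2 l l']
    by_cases hll : l' = l
    · subst hll
      rw [if_pos rfl, if_pos rfl]
      by_cases hz : μ l' = 0
      · simp [hz]
      · rw [if_neg hz]
        have hpos : 0 < μ l' := lt_of_le_of_ne (hμ0 l') (Ne.symm hz)
        rw [← Complex.ofReal_mul, ← Complex.ofReal_mul]
        norm_cast
        rw [mul_assoc, ← Real.sqrt_inv, Real.mul_self_sqrt (inv_nonneg.mpr (hμ0 l'))]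
        field_simp
    · rw [if_neg hll, if_neg hll, zero_mul, zero_mul]
  set K : ι → ι → ℂ := fun i m => ∑ l, c i l * (starRingEnd ℂ) (c m l) with hK
  have hczero : ∀ i l, μ l = 0 → c i l = 0 := by
    intro i l hl
    simp [hc, hgz i l hl]
  have hKmul : ∀ i m, (∑ m', K i m' * K m' m) = K i m := by
    intro i m
    calc ∑ m', K i m' * K m' m
        = ∑ m', ∑ l, ∑ l', (c i l * (starRingEnd ℂ) (c m' l)) * (c m' l' * (starRingEnd ℂ) (c m l')) := by
          refine Finset.sum_congr rfl fun m' _ => ?_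
          rw [hK]
          rw [Finset.sum_mul_sum]
      _ = ∑ l, ∑ l', ∑ m', (c i l * (starRingEnd ℂ) (c m' l)) * (c m' l' * (starRingEnd ℂ) (c m l')) := by
          rw [Finset.sum_comm]
          exact Finset.sum_congr rfl fun l _ => Finset.sum_comm
      _ = ∑ l, ∑ l', (c i l * (starRingEnd ℂ) (c m l')) * ∑ m', (starRingEnd ℂ) (c m' l) * c m' l' := by
          refine Finset.sum_congr rfl fun l _ => Finset.sum_congr rfl fun l' _ => ?_
          rw [Finset.mul_sum]
          exact Finset.sum_congr rfl fun m' _ => by ring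
      _ = ∑ l, ∑ l', (c i l * (starRingEnd ℂ) (c m l')) *
            (if l' = l then ((if μ l' = 0 then (0:ℝ) else 1) : ℂ) else 0) := by
          refine Finset.sum_congr rfl fun l _ => Finset.sum_congr rfl fun l' _ => ?_
          rw [hccdiag l l']
      _ = K i m := by
          rw [hK]
          refine Finset.sum_congr rfl fun l _ => ?_
          simp only [mul_ite, mul_zero, Finset.sum_ite_eq', Finset.mem_univ, if_pos]
          by_cases hz : μ l = 0
          · simp [hz, hczero i l hz]
          · simp [hz]
  have hKherm : ∀ i m, (starRingEnd ℂ) (K i m) = K m i := by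
    intro i m
    rw [hK]
    simp only [map_sum, _root_.map_mul, Complex.conj_conj]
    exact Finset.sum_congr rfl fun l _ => mul_comm _ _
  have F3 : ∀ i, ∑ l, Complex.normSq (g i l) / μ l ≤ 1 := by
    intro i
    set t : ℝ := ∑ l, Complex.normSq (c i l) with ht
    have ht0 : 0 ≤ t := Finset.sum_nonneg fun l _ => Complex.normSq_nonneg _
    have hKii : K i i = (t : ℂ) := by
      rw [hK, ht]
      push_cast
      exact Finset.sum_congr rfl fun l _ => (Complex.mul_conj _)
    have hKsq : (t : ℂ) = ∑ m, (Complex.normSq (K i m) : ℂ) := by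
      rw [← hKii, ← hKmul i i]
      refine Finset.sum_congr rfl fun m _ => ?_
      rw [← hKherm i m, Complex.mul_conj]
    have htr : t = ∑ m, Complex.normSq (K i m) := by exact_mod_cast hKsq
    have hle : Complex.normSq (K i i) ≤ t := by
      rw [htr]
      exact Finset.single_le_sum (fun m _ => Complex.normSq_nonneg _) (Finset.mem_univ i)
    rw [hKii, Complex.normSq_ofReal] at hle
    have ht1 : t ≤ 1 := by nlinarith
    calc ∑ l, Complex.normSq (g i l) / μ l = t := by
          rw [ht]
          exact Finset.sum_congr rfl fun l _ => (hnormc i l).symm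
      _ ≤ 1 := ht1
  have hb0 : ∀ i l, 0 ≤ Complex.normSq (g i l) / μ l :=
    fun i l => div_nonneg (Complex.normSq_nonneg _) (hμ0 l)
  have hbμ : ∀ i l, Complex.normSq (g i l) / μ l * μ l = Complex.normSq (g i l) := by
    intro i l
    rcases eq_or_lt_of_le (hμ0 l) with h | h
    · rw [← h, mul_zero, hgz i l h.symm]
      simp
    · field_simp
  have hcol : ∀ l, 0 < μ l → ∑ i, Complex.normSq (g i l) / μ l = 1 := by
    intro l hl
    rw [← Finset.sum_div, ← hμr l, div_self hl.ne']
  have hvn : vnEntropy σ = ∑ l, Real.negMulLog (μ l) := by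
    unfold vnEntropy
    rw [dif_pos hH]
  rw [hvn]
  calc ∑ l, Real.negMulLog (μ l)
      = ∑ l, ∑ i, (Complex.normSq (g i l) / μ l) * Real.negMulLog (μ l) := by
        refine Finset.sum_congr rfl fun l _ => ?_
        rcases eq_or_lt_of_le (hμ0 l) with h | h
        · rw [← h]
          simp
        · rw [← Finset.sum_mul, hcol l h, one_mul]
    _ = ∑ i, ∑ l, (Complex.normSq (g i l) / μ l) * Real.negMulLog (μ l) := Finset.sum_comm
    _ ≤ ∑ i, Real.negMulLog (∑ x, Complex.normSq (u i x)) := by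
        refine Finset.sum_le_sum fun i _ => ?_
        have hj := jensen_negMulLog (fun l => Complex.normSq (g i l) / μ l) μ
          (hb0 i) (F3 i) hμ0
        have hrw : ∑ l, (Complex.normSq (g i l) / μ l) * μ l = ∑ x, Complex.normSq (u i x) := by
          rw [← F1 i]
          exact Finset.sum_congr rfl fun l _ => hbμ i l
        rwa [hrw] at hj

section PSDFacts
variable {α β : Type*} [Fintype α] [Fintype β] [DecidableEq α] [DecidableEq β]

lemma psd_diag_nonneg {n : Type*} [Fintype n] [DecidableEq n] {M : Matrix n n ℂ}
    (hM : M.PosSemidef) (i : n) : 0 ≤ M i i := by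
  have h := hM.dotProduct_mulVec_nonneg (Pi.single i 1)
  simpa [dotProduct, Matrix.mulVec, Pi.single_apply, Finset.sum_ite_eq,
    mul_ite, ite_mul] using h

lemma psd_trace_re_nonneg {n : Type*} [Fintype n] [DecidableEq n] {M : Matrix n n ℂ}
    (hM : M.PosSemidef) : 0 ≤ M.trace.re := by
  have h : (0:ℂ) ≤ M.trace := Finset.sum_nonneg fun i _ => psd_diag_nonneg hM i
  exact (Complex.le_def.mp h).1

omit [DecidableEq β] in
lemma ptrFst_posSemidef {M : Matrix (α × β) (α × β) ℂ}
    (hM : M.PosSemidef) : (ptrFst M).PosSemidef := by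
  refine Matrix.PosSemidef.of_dotProduct_mulVec_nonneg ?_ ?_
  · ext b b'
    rw [Matrix.conjTranspose_apply]
    show star (ptrFst M b' b) = ptrFst M b b'
    calc star (∑ i, M (i, b') (i, b)) = ∑ i, star (M (i, b') (i, b)) := star_sum _ _
      _ = ∑ i, M (i, b) (i, b') := by
          refine Finset.sum_congr rfl fun i _ => ?_
          have h := congrFun (congrFun hM.1 (i, b)) (i, b')
          rw [Matrix.conjTranspose_apply] at h
          exact h
      _ = ptrFst M b b' := rfl
  · intro x
    have hsum : star x ⬝ᵥ (ptrFst M) *ᵥ x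
        = ∑ i, star (fun p : α × β => if p.1 = i then x p.2 else 0) ⬝ᵥ
            M *ᵥ (fun p : α × β => if p.1 = i then x p.2 else 0) := by
      simp only [dotProduct, Matrix.mulVec, Pi.star_apply, apply_ite (star : ℂ → ℂ),
        star_zero, Fintype.sum_prod_type, ite_mul, mul_ite, zero_mul, mul_zero,
        Finset.sum_ite_irrel, Finset.sum_const_zero, Finset.sum_ite_eq, Finset.sum_ite_eq',
        Finset.mem_univ, if_pos, if_true, ptrFst, Matrix.of_apply, Finset.mul_sum,
        Finset.sum_mul]
      calc ∑ b : β, ∑ b' : β, ∑ i : α, star (x b) * (M (i, b) (i, b') * x b')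
          = ∑ b : β, ∑ i : α, ∑ b' : β, star (x b) * (M (i, b) (i, b') * x b') :=
            Finset.sum_congr rfl fun b _ => Finset.sum_comm
        _ = ∑ i : α, ∑ b : β, ∑ b' : β, star (x b) * (M (i, b) (i, b') * x b') :=
            Finset.sum_comm
    rw [hsum]
    exact Finset.sum_nonneg fun i _ => hM.dotProduct_mulVec_nonneg _

lemma psd_real_smul {n : Type*} [Fintype n] [DecidableEq n] {M : Matrix n n ℂ}
    (hM : M.PosSemidef) {r : ℝ} (hr : 0 ≤ r) : (r • M).PosSemidef := by
  refine Matrix.PosSemidef.of_dotProduct_mulVec_nonneg ?_ ?_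
  · ext i j
    rw [Matrix.conjTranspose_apply, Matrix.smul_apply, Matrix.smul_apply, star_smul,
      star_trivial]
    congr 1
    have h := congrFun (congrFun hM.1 i) j
    rw [Matrix.conjTranspose_apply] at h
    exact h
  · intro x
    have h0 := hM.dotProduct_mulVec_nonneg x
    have h : star x ⬝ᵥ (r • M) *ᵥ x = (r:ℂ) * (star x ⬝ᵥ M *ᵥ x) := by
      rw [Matrix.smul_mulVec, dotProduct_smul, Complex.real_smul]
    rw [h]
    exact mul_nonneg (by exact_mod_cast hr) h0

lemma kron_one_herm {P : Matrix α α ℂ} (hP : P.IsHermitian) :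
    ((P ⊗ₖ (1 : Matrix β β ℂ)) : Matrix (α × β) (α × β) ℂ)ᴴ = P ⊗ₖ (1 : Matrix β β ℂ) := by
  ext ⟨a, b⟩ ⟨a', b'⟩
  simp only [Matrix.conjTranspose_apply, Matrix.kroneckerMap_apply, star_mul']
  have h1 : star (P a' a) = P a a' := by
    have h := congrFun (congrFun hP a) a'
    rw [Matrix.conjTranspose_apply] at h
    exact h
  have h2 : star ((1 : Matrix β β ℂ) b' b) = (1 : Matrix β β ℂ) b b' := by
    by_cases hb : b = b'
    · subst hb; simp
    · simp [Matrix.one_apply, hb, Ne.symm hb]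
  rw [h1, h2]

lemma kron_one_idem {P : Matrix α α ℂ} (hPP : P * P = P) :
    (P ⊗ₖ (1 : Matrix β β ℂ)) * (P ⊗ₖ (1 : Matrix β β ℂ)) = P ⊗ₖ (1 : Matrix β β ℂ) := by
  rw [← Matrix.mul_kronecker_mul, hPP, one_mul]

omit [DecidableEq α] [DecidableEq β] in
lemma ptrFst_trace (M : Matrix (α × β) (α × β) ℂ) : (ptrFst M).trace = M.trace := by
  rw [Matrix.trace, Matrix.trace]
  rw [Fintype.sum_prod_type]
  rw [Finset.sum_comm]
  rfl

lemma trace_proj_cycle {ρ : Matrix (α × β) (α × β) ℂ} {P : Matrix α α ℂ}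
    (hPP : P * P = P) :
    ((P ⊗ₖ (1 : Matrix β β ℂ)) * ρ * (P ⊗ₖ 1)).trace = (ρ * (P ⊗ₖ (1 : Matrix β β ℂ))).trace := by
  set Q := P ⊗ₖ (1 : Matrix β β ℂ) with hQ
  have hQQ : Q * Q = Q := kron_one_idem hPP
  calc (Q * ρ * Q).trace = (Q * (Q * ρ)).trace := Matrix.trace_mul_comm _ _
    _ = ((Q * Q) * ρ).trace := by rw [mul_assoc]
    _ = (Q * ρ).trace := by rw [hQQ]
    _ = (ρ * Q).trace := Matrix.trace_mul_comm _ _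

lemma term_nonneg {ρ : Matrix (α × β) (α × β) ℂ} (hρ : ρ.PosSemidef)
    {P : Matrix α α ℂ} (hP : P.IsHermitian) (hPP : P * P = P) :
    0 ≤ measProb ρ P * vnEntropy (postState ρ P) := by
  set Q := P ⊗ₖ (1 : Matrix β β ℂ) with hQ
  have hQH : Qᴴ = Q := kron_one_herm hP
  have hN : (Q * ρ * Q).PosSemidef := by
    have h := hρ.mul_mul_conjTranspose_same Q
    rwa [hQH] at h
  have hmeas : measProb ρ P = (Q * ρ * Q).trace.re := by
    unfold measProb
    rw [trace_proj_cycle hPP]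
  have hp0 : 0 ≤ measProb ρ P := by
    rw [hmeas]; exact psd_trace_re_nonneg hN
  by_cases hz : measProb ρ P = 0
  · rw [hz, zero_mul]
  have hppos : 0 < measProb ρ P := lt_of_le_of_ne hp0 (Ne.symm hz)
  have hpostpsd : (postState ρ P).PosSemidef := by
    unfold postState
    exact psd_real_smul (ptrFst_posSemidef hN) (inv_nonneg.mpr hp0)
  have htrpost : (postState ρ P).trace.re = 1 := by
    have h1 : (postState ρ P).trace = ((measProb ρ P)⁻¹ : ℝ) • (ptrFst (Q * ρ * Q)).trace := by
      unfold postState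
      rw [Matrix.trace_smul]
    rw [h1, ptrFst_trace]
    rw [Complex.real_smul, Complex.mul_re, Complex.ofReal_re, Complex.ofReal_im, zero_mul,
      sub_zero, ← hmeas]
    field_simp
  have hsum1 : ∑ k, hpostpsd.1.eigenvalues k = 1 := by
    have h := herm_trace hpostpsd.1
    have h2 : (postState ρ P).trace = ((∑ k, hpostpsd.1.eigenvalues k : ℝ) : ℂ) := by
      rw [h]
      push_cast
      rfl
    have h3 := congrArg Complex.re h2
    rw [htrpost, Complex.ofReal_re] at h3
    exact h3.symm
  have heig0 : ∀ k, 0 ≤ hpostpsd.1.eigenvalues k := fun k => hpostpsd.eigenvalues_nonneg k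
  have heig1 : ∀ k, hpostpsd.1.eigenvalues k ≤ 1 := by
    intro k
    rw [← hsum1]
    exact Finset.single_le_sum (fun m _ => heig0 m) (Finset.mem_univ k)
  have hvnn : 0 ≤ vnEntropy (postState ρ P) := by
    unfold vnEntropy
    rw [dif_pos hpostpsd.1]
    exact Finset.sum_nonneg fun k _ => Real.negMulLog_nonneg (heig0 k) (heig1 k)
  exact mul_nonneg hp0 hvnn

end PSDFacts

/-- the scalar computation `p·Σ H(s/p) = Σ H(s) − H(p)`. -/
lemma scalar_block {ι : Type*} [Fintype ι] (p : ℝ) (hp : 0 < p) (s : ι → ℝ)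
    (hsum : ∑ k, s k = p) :
    p * ∑ k, Real.negMulLog (s k / p) = ∑ k, Real.negMulLog (s k) - Real.negMulLog p := by
  have h : ∀ k, Real.negMulLog (s k / p)
      = p⁻¹ * Real.negMulLog (s k) + s k * Real.negMulLog p⁻¹ := by
    intro k
    rw [div_eq_mul_inv, Real.negMulLog_mul]
  simp only [h]
  rw [Finset.sum_add_distrib, ← Finset.mul_sum, ← Finset.sum_mul, hsum]
  have hlog : Real.negMulLog p⁻¹ = p⁻¹ * Real.log p := by
    rw [Real.negMulLog, Real.log_inv]
    ring
  rw [hlog, Real.negMulLog]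
  field_simp
  ring

end AuxLemmas

/-- Quantum discord is bounded above by the entropy of the measured subsystem:
`D(A,B) ≤ H(ρ_A)`. -/
theorem stmt_5 {α β : Type*} [Fintype α] [Fintype β] [DecidableEq α] [DecidableEq β]
    (ρ : Matrix (α × β) (α × β) ℂ) (hρ : ρ.PosSemidef) (htr : ρ.trace = 1) :
    discordA ρ ≤ vnEntropy (ptrSnd ρ) := by
  classical
  have hH : ρ.IsHermitian := hρ.1
  set V : Matrix (α × β) (α × β) ℂ := (hH.eigenvectorUnitary : Matrix (α × β) (α × β) ℂ) with hV
  set lam : α × β → ℝ := hH.eigenvalues with hlam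
  have hent : ∀ x y, ρ x y = ∑ k, (lam k : ℂ) * (V x k * (starRingEnd ℂ) (V y k)) :=
    fun x y => herm_entries hH x y
  have hlam0 : ∀ k, 0 ≤ lam k := fun k => hρ.eigenvalues_nonneg k
  have hlam1 : ∑ k, lam k = 1 := by
    have h := herm_trace hH
    rw [htr] at h
    exact_mod_cast h.symm
  set q : α → α × β → ℝ := fun j k => ∑ b, Complex.normSq (V (j, b) k) with hq
  have hq0 : ∀ j k, 0 ≤ q j k := fun j k => Finset.sum_nonneg fun b _ => Complex.normSq_nonneg _
  have hVU : star V * V = 1 := Matrix.mem_unitaryGroup_iff'.mp (hH.eigenvectorUnitary).2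
  have hq1 : ∀ k, ∑ j, q j k = 1 := by
    intro k
    have h := congrFun (congrFun hVU k) k
    have h2 : (star V * V) k k = ∑ p : α × β, (Complex.normSq (V p k) : ℂ) := by
      rw [Matrix.mul_apply]
      refine Finset.sum_congr rfl fun p _ => ?_
      rw [Matrix.star_apply]
      exact (mul_comm _ _).trans (Complex.mul_conj _)
    rw [h2, Matrix.one_apply_eq] at h
    have h3 : ∑ p : α × β, Complex.normSq (V p k) = 1 := by exact_mod_cast h
    show ∑ j, ∑ b, Complex.normSq (V (j, b) k) = 1
    rw [Fintype.sum_prod_type] at h3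
    exact h3
  set s : α → α × β → ℝ := fun j k => lam k * q j k with hs
  have hs0 : ∀ j k, 0 ≤ s j k := fun j k => mul_nonneg (hlam0 k) (hq0 j k)
  -- the standard-basis measurement
  have hP0herm : ∀ j : α, (Matrix.single j j (1:ℂ)).IsHermitian := by
    intro j
    ext a b
    simp only [Matrix.conjTranspose_apply, Matrix.single, Matrix.of_apply,
      apply_ite (star : ℂ → ℂ), star_one, star_zero]
    by_cases h1 : j = a <;> by_cases h2 : j = b <;> simp [h1, h2]
  have hP0idem : ∀ j : α, Matrix.single j j (1:ℂ) * Matrix.single j j 1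
      = Matrix.single j j 1 := by
    intro j
    rw [Matrix.single_mul_single_same, one_mul]
  have hP0orth : ∀ j j' : α, j ≠ j' →
      Matrix.single j j (1:ℂ) * Matrix.single j' j' 1 = 0 :=
    fun j j' h => Matrix.single_mul_single_of_ne _ _ _ _ h _
  have hP0comp : ∑ j : α, Matrix.single j j (1:ℂ) = 1 := by
    ext a b
    rw [Matrix.sum_apply]
    simp only [Matrix.single, Matrix.of_apply]
    by_cases hab : a = b
    · subst hab
      rw [Matrix.one_apply_eq]
      rw [Finset.sum_eq_single a (fun j _ hj => if_neg fun hc => hj hc.1) (by simp)]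
      simp
    · rw [Matrix.one_apply_ne hab]
      exact Finset.sum_eq_zero fun j _ => if_neg fun hc => hab (hc.1.symm.trans hc.2)
  set m₀ : ProjMeas α := ⟨fun j => Matrix.single j j 1, hP0herm, hP0idem, hP0orth,
    hP0comp⟩ with hm₀
  -- entries of the projected blocks
  have hE : ∀ j : α, (Matrix.single j j (1:ℂ) ⊗ₖ (1 : Matrix β β ℂ))
      = Matrix.diagonal (fun p : α × β => if p.1 = j then (1:ℂ) else 0) := by
    intro j
    ext ⟨a, b⟩ ⟨a', b'⟩
    simp only [Matrix.kroneckerMap_apply, Matrix.single, Matrix.of_apply,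
      Matrix.one_apply, Matrix.diagonal_apply]
    by_cases h1 : j = a <;> by_cases h2 : j = a' <;> by_cases h3 : b = b' <;>
      by_cases h4 : a = a' <;> simp_all [Prod.ext_iff, eq_comm] <;> tauto
  have hLR : ∀ (j : α) (p p' : α × β),
      ((Matrix.single j j (1:ℂ) ⊗ₖ (1 : Matrix β β ℂ)) * ρ *
        (Matrix.single j j (1:ℂ) ⊗ₖ (1 : Matrix β β ℂ))) p p'
      = (if p.1 = j then (1:ℂ) else 0) * ρ p p' * (if p'.1 = j then (1:ℂ) else 0) := by
    intro j p p'
    rw [hE j, Matrix.mul_diagonal, Matrix.diagonal_mul]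
  have hblock : ∀ (j : α) (b b' : β),
      ptrFst ((Matrix.single j j (1:ℂ) ⊗ₖ (1 : Matrix β β ℂ)) * ρ *
        (Matrix.single j j (1:ℂ) ⊗ₖ (1 : Matrix β β ℂ))) b b' = ρ (j, b) (j, b') := by
    intro j b b'
    have hopen : ptrFst ((Matrix.single j j (1:ℂ) ⊗ₖ (1 : Matrix β β ℂ)) * ρ *
        (Matrix.single j j (1:ℂ) ⊗ₖ (1 : Matrix β β ℂ))) b b'
        = ∑ i, ((Matrix.single j j (1:ℂ) ⊗ₖ (1 : Matrix β β ℂ)) * ρ *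
          (Matrix.single j j (1:ℂ) ⊗ₖ (1 : Matrix β β ℂ))) (i, b) (i, b') := rfl
    rw [hopen]
    simp only [hLR]
    rw [Finset.sum_eq_single j (fun i _ hi => by simp [hi]) (by simp)]
    simp
  -- measurement probabilities
  have hdiagsum : ∀ j : α, ∑ b, ρ (j, b) (j, b) = ((∑ k, s j k : ℝ) : ℂ) := by
    intro j
    calc ∑ b, ρ (j, b) (j, b)
        = ∑ b, ∑ k, (lam k : ℂ) * (V (j, b) k * (starRingEnd ℂ) (V (j, b) k)) := by
          exact Finset.sum_congr rfl fun b _ => hent (j, b) (j, b)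
      _ = ∑ k, ∑ b, (lam k : ℂ) * (V (j, b) k * (starRingEnd ℂ) (V (j, b) k)) :=
          Finset.sum_comm
      _ = ((∑ k, s j k : ℝ) : ℂ) := by
          push_cast
          refine Finset.sum_congr rfl fun k _ => ?_
          rw [hs, hq]
          push_cast
          rw [Finset.mul_sum]
          refine Finset.sum_congr rfl fun b _ => ?_
          rw [Complex.mul_conj]
  have hmeasP : ∀ j : α, measProb ρ (Matrix.single j j 1) = ∑ k, s j k := by
    intro j
    unfold measProb
    have h1 : (ρ * (Matrix.single j j (1:ℂ) ⊗ₖ (1 : Matrix β β ℂ))).trace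
        = ((Matrix.single j j (1:ℂ) ⊗ₖ (1 : Matrix β β ℂ)) * ρ *
            (Matrix.single j j (1:ℂ) ⊗ₖ (1 : Matrix β β ℂ))).trace := (trace_proj_cycle (hP0idem j)).symm
    rw [h1]
    have h2 : ((Matrix.single j j (1:ℂ) ⊗ₖ (1 : Matrix β β ℂ)) * ρ *
        (Matrix.single j j (1:ℂ) ⊗ₖ (1 : Matrix β β ℂ))).trace = ∑ b, ρ (j, b) (j, b) := by
      rw [Matrix.trace, Fintype.sum_prod_type]
      calc ∑ i, ∑ b, ((Matrix.single j j (1:ℂ) ⊗ₖ (1 : Matrix β β ℂ)) * ρ *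
            (Matrix.single j j (1:ℂ) ⊗ₖ (1 : Matrix β β ℂ))).diag (i, b)
          = ∑ i, ∑ b, (if i = j then (1:ℂ) else 0) * ρ (i, b) (i, b) * (if i = j then 1 else 0) := by
            refine Finset.sum_congr rfl fun i _ => Finset.sum_congr rfl fun b _ => ?_
            exact hLR j (i, b) (i, b)
        _ = ∑ b, ρ (j, b) (j, b) := by
            rw [Finset.sum_comm]
            refine Finset.sum_congr rfl fun b _ => ?_
            rw [Finset.sum_eq_single j (fun i _ hi => by simp [hi]) (by simp)]
            simp
    rw [h2, hdiagsum j, Complex.ofReal_re]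
  -- key per-block bound
  have hkey : ∀ j : α, measProb ρ (Matrix.single j j 1) *
      vnEntropy (postState ρ (Matrix.single j j 1))
      ≤ ∑ k, Real.negMulLog (s j k)
        - Real.negMulLog (measProb ρ (Matrix.single j j 1)) := by
    intro j
    have hpsum : measProb ρ (Matrix.single j j 1) = ∑ k, s j k := hmeasP j
    have hp0 : 0 ≤ measProb ρ (Matrix.single j j 1) := by
      rw [hpsum]; exact Finset.sum_nonneg fun k _ => hs0 j k
    by_cases hz : measProb ρ (Matrix.single j j 1) = 0
    · have hsz : ∀ k, s j k = 0 := by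
        have h0 : ∑ k, s j k = 0 := by rw [← hpsum, hz]
        intro k
        exact (Finset.sum_eq_zero_iff_of_nonneg (fun k _ => hs0 j k)).mp h0 k (Finset.mem_univ k)
      rw [hz, zero_mul]
      simp [hsz, hz]
    · have hppos : 0 < measProb ρ (Matrix.single j j 1) :=
        lt_of_le_of_ne hp0 (Ne.symm hz)
      set p := measProb ρ (Matrix.single j j (1:ℂ)) with hpdef
      have hform : ∀ b b', postState ρ (Matrix.single j j 1) b b'
          = ∑ k, (((Real.sqrt (lam k) * (Real.sqrt p)⁻¹ : ℝ) : ℂ) * V (j, b) k) *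
              (starRingEnd ℂ) (((Real.sqrt (lam k) * (Real.sqrt p)⁻¹ : ℝ) : ℂ) * V (j, b') k) := by
        intro b b'
        have hpost : postState ρ (Matrix.single j j 1) b b'
            = ((p⁻¹ : ℝ) : ℂ) * ρ (j, b) (j, b') := by
          unfold postState
          rw [Matrix.smul_apply, hblock j b b', Complex.real_smul]
        rw [hpost, hent (j, b) (j, b'), Finset.mul_sum]
        refine Finset.sum_congr rfl fun k _ => ?_
        rw [_root_.map_mul, Complex.conj_ofReal]
        have hr : (((Real.sqrt (lam k) * (Real.sqrt p)⁻¹ : ℝ) : ℂ)) *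
            (((Real.sqrt (lam k) * (Real.sqrt p)⁻¹ : ℝ) : ℂ)) = ((lam k * p⁻¹ : ℝ) : ℂ) := by
          rw [← Complex.ofReal_mul]
          congr 1
          rw [show (Real.sqrt (lam k) * (Real.sqrt p)⁻¹) * (Real.sqrt (lam k) * (Real.sqrt p)⁻¹)
            = (Real.sqrt (lam k) * Real.sqrt (lam k)) * ((Real.sqrt p)⁻¹ * (Real.sqrt p)⁻¹)
            from by ring]
          rw [Real.mul_self_sqrt (hlam0 k), ← Real.sqrt_inv,
            Real.mul_self_sqrt (inv_nonneg.mpr hp0)]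
        calc ((p⁻¹ : ℝ) : ℂ) * ((lam k : ℂ) * (V (j, b) k * (starRingEnd ℂ) (V (j, b') k)))
            = ((lam k * p⁻¹ : ℝ) : ℂ) * (V (j, b) k * (starRingEnd ℂ) (V (j, b') k)) := by
              push_cast
              ring
          _ = _ := by
              rw [← hr]
              ring
      have hens := vnEntropy_le_of_ensemble
        (fun k b => (((Real.sqrt (lam k) * (Real.sqrt p)⁻¹ : ℝ) : ℂ) * V (j, b) k))
        (postState ρ (Matrix.single j j 1)) hform
      have hw : ∀ k, ∑ b, Complex.normSq
          ((((Real.sqrt (lam k) * (Real.sqrt p)⁻¹ : ℝ) : ℂ)) * V (j, b) k) = s j k / p := by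
        intro k
        have : ∀ b, Complex.normSq ((((Real.sqrt (lam k) * (Real.sqrt p)⁻¹ : ℝ) : ℂ)) * V (j, b) k)
            = (lam k * p⁻¹) * Complex.normSq (V (j, b) k) := by
          intro b
          rw [Complex.normSq_mul, Complex.normSq_ofReal]
          congr 1
          rw [show (Real.sqrt (lam k) * (Real.sqrt p)⁻¹) * (Real.sqrt (lam k) * (Real.sqrt p)⁻¹)
            = (Real.sqrt (lam k) * Real.sqrt (lam k)) * ((Real.sqrt p)⁻¹ * (Real.sqrt p)⁻¹)
            from by ring]
          rw [Real.mul_self_sqrt (hlam0 k), ← Real.sqrt_inv,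
            Real.mul_self_sqrt (inv_nonneg.mpr hp0)]
        simp only [this]
        rw [← Finset.mul_sum, hs, hq]
        field_simp
        try ring
      simp only [hw] at hens
      have hsc := scalar_block p hppos (s j) hpsum.symm
      calc p * vnEntropy (postState ρ (Matrix.single j j 1))
          ≤ p * ∑ k, Real.negMulLog (s j k / p) := by
            exact mul_le_mul_of_nonneg_left hens hp0
        _ = ∑ k, Real.negMulLog (s j k) - Real.negMulLog p := hsc
  -- summing up
  have hvnρ : vnEntropy ρ = ∑ k, Real.negMulLog (lam k) := by
    unfold vnEntropy
    rw [dif_pos hH]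
  have hKL : ∀ j : α, ∑ k, lam k * Real.negMulLog (q j k)
      ≤ Real.negMulLog (measProb ρ (Matrix.single j j 1)) := by
    intro j
    have hj := jensen_negMulLog lam (q j) hlam0 (le_of_eq hlam1) (hq0 j)
    have h2 : ∑ k, lam k * q j k = measProb ρ (Matrix.single j j 1) := by
      rw [hmeasP j]
    rwa [h2] at hj
  have hchain : ∑ j, measProb ρ (m₀.P j) * vnEntropy (postState ρ (m₀.P j)) ≤ vnEntropy ρ := by
    have step1 : ∑ j, measProb ρ (m₀.P j) * vnEntropy (postState ρ (m₀.P j))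
        ≤ ∑ j, (∑ k, Real.negMulLog (s j k)
            - Real.negMulLog (measProb ρ (Matrix.single j j 1))) :=
      Finset.sum_le_sum fun j _ => hkey j
    have step2 : ∑ j, ∑ k, Real.negMulLog (s j k)
        = (∑ k, Real.negMulLog (lam k)) + ∑ j, ∑ k, lam k * Real.negMulLog (q j k) := by
      have h : ∀ j k, Real.negMulLog (s j k)
          = q j k * Real.negMulLog (lam k) + lam k * Real.negMulLog (q j k) := by
        intro j k
        rw [hs]
        exact Real.negMulLog_mul _ _
      simp only [h]
      calc ∑ j, ∑ k, (q j k * Real.negMulLog (lam k) + lam k * Real.negMulLog (q j k))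
          = ∑ j, ((∑ k, q j k * Real.negMulLog (lam k)) + ∑ k, lam k * Real.negMulLog (q j k)) :=
            Finset.sum_congr rfl fun j _ => Finset.sum_add_distrib
        _ = (∑ j, ∑ k, q j k * Real.negMulLog (lam k))
            + ∑ j, ∑ k, lam k * Real.negMulLog (q j k) := Finset.sum_add_distrib
        _ = (∑ k, Real.negMulLog (lam k)) + ∑ j, ∑ k, lam k * Real.negMulLog (q j k) := by
            congr 1
            rw [Finset.sum_comm]
            refine Finset.sum_congr rfl fun k _ => ?_
            rw [← Finset.sum_mul, hq1 k, one_mul]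
    have step3 : ∑ j, ∑ k, lam k * Real.negMulLog (q j k)
        ≤ ∑ j, Real.negMulLog (measProb ρ (Matrix.single j j 1)) :=
      Finset.sum_le_sum fun j _ => hKL j
    calc ∑ j, measProb ρ (m₀.P j) * vnEntropy (postState ρ (m₀.P j))
        ≤ ∑ j, (∑ k, Real.negMulLog (s j k)
            - Real.negMulLog (measProb ρ (Matrix.single j j 1))) := step1
      _ = ∑ j, ∑ k, Real.negMulLog (s j k)
          - ∑ j, Real.negMulLog (measProb ρ (Matrix.single j j 1)) :=
          Finset.sum_sub_distrib _ _
      _ ≤ vnEntropy ρ := by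
          rw [step2, hvnρ]
          linarith
  have hbdd : BddBelow (Set.range fun m : ProjMeas α =>
      ∑ j, measProb ρ (m.P j) * vnEntropy (postState ρ (m.P j))) := by
    refine ⟨0, ?_⟩
    rintro y ⟨m, rfl⟩
    exact Finset.sum_nonneg fun j _ => term_nonneg hρ (m.herm j) (m.idem j)
  have hinf : condEntA ρ ≤ ∑ j, measProb ρ (m₀.P j) * vnEntropy (postState ρ (m₀.P j)) :=
    ciInf_le hbdd m₀
  have hcond : condEntA ρ ≤ vnEntropy ρ := le_trans hinf hchain
  unfold discordA
  linarith
end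

section
/- Maximizing Σ_k |λ_k| over real numbers λ_1,...,λ_{2N} subject to Σ_k λ_k = 1 and Σ_k λ_k² = (1+α²)/(2N) yields the upper bound √(1+α²), attained (with t treated as continuous) when t = N(1 − 1/√(1+α²)) of the eigenvalues are equal and negative and the remaining 2N−t are equal and nonnegative. -/
/-- Maximizing `Σ_k |λ_k|` over `λ : Fin (2N) → ℝ` subject to `Σ λ_k = 1` and
`Σ λ_k² = (1+α²)/(2N)` yields the upper bound `√(1+α²)`; with the degeneracy parameter
`t` treated as continuous, the value `t = N(1 − 1/√(1+α²))` attains it: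
`(N − t + α√(t(2N−t)))/N = √(1+α²)`. -/
theorem stmt_12 (N : ℕ) (hN : 0 < N) (a : ℝ) (ha : 0 ≤ a) :
    (∀ lam : Fin (2 * N) → ℝ,
        ∑ k, lam k = 1 →
        ∑ k, lam k ^ 2 = (1 + a ^ 2) / (2 * N) →
        ∑ k, |lam k| ≤ Real.sqrt (1 + a ^ 2)) ∧
    ((N : ℝ) - N * (1 - 1 / Real.sqrt (1 + a ^ 2)) +
        a * Real.sqrt ((N * (1 - 1 / Real.sqrt (1 + a ^ 2))) *
          (2 * N - N * (1 - 1 / Real.sqrt (1 + a ^ 2))))) / N =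
      Real.sqrt (1 + a ^ 2) := by
  have h1 : (0:ℝ) < 1 + a ^ 2 := by positivity
  set s := Real.sqrt (1 + a ^ 2) with hsdef
  have hs2 : s ^ 2 = 1 + a ^ 2 := Real.sq_sqrt h1.le
  have hspos : 0 < s := Real.sqrt_pos.mpr h1
  have hNpos : (0:ℝ) < N := by exact_mod_cast hN
  constructor
  · intro lam h1' h2'
    have key : (∑ k, |lam k|) ^ 2 ≤ (Finset.univ : Finset (Fin (2 * N))).card *
        ∑ k, |lam k| ^ 2 := sq_sum_le_card_mul_sum_sq
    have hcard : ((Finset.univ : Finset (Fin (2 * N))).card : ℝ) = 2 * N := by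
      simp [Finset.card_univ]
    have habs : ∑ k, |lam k| ^ 2 = (1 + a ^ 2) / (2 * N) := by
      simpa [sq_abs] using h2'
    have key2 : (∑ k, |lam k|) ^ 2 ≤ 1 + a ^ 2 := by
      calc (∑ k, |lam k|) ^ 2
          ≤ ((Finset.univ : Finset (Fin (2 * N))).card : ℝ) * ∑ k, |lam k| ^ 2 := by
            exact_mod_cast key
        _ = (2 * N) * ((1 + a ^ 2) / (2 * N)) := by rw [hcard, habs]
        _ = 1 + a ^ 2 := by field_simp
    have hnn : 0 ≤ ∑ k, |lam k| := Finset.sum_nonneg fun k _ => abs_nonneg _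
    nlinarith [hs2, hspos]
  · have hsqrt : Real.sqrt ((N * (1 - 1 / s)) * (2 * N - N * (1 - 1 / s)))
        = N * a / s := by
      rw [show (N * (1 - 1 / s)) * (2 * N - N * (1 - 1 / s)) = (N * a / s) ^ 2 by
        field_simp
        linear_combination hs2]
      exact Real.sqrt_sq (by positivity)
    rw [hsqrt]
    field_simp
    nlinarith [hs2]
end

section
/- For every n-qubit unitary U and every polarization 0 ≤ α ≤ 1 and every bipartite division of the n+1 qubits, the multiplicative negativity of the DQC1 output state ρ_{n+1}(α) is at most √(1+α²); in particular for α = 1 it is at most √2, independent of n. -/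
open Matrix Kronecker

/-- Trace norm of a Hermitian matrix: sum of the absolute values of its eigenvalues. -/
noncomputable def traceNorm {n : Type*} [Fintype n] [DecidableEq n]
    (A : Matrix n n ℂ) : ℝ :=
  if h : A.IsHermitian then ∑ i, |h.eigenvalues i| else 0

/-- The DQC1 output state on the special qubit together with `n` qubits split as `A × B`:
`ρ = (1/2N)(I + α(|0⟩⟨1| ⊗ U† + |1⟩⟨0| ⊗ U))`, `N = dim(A × B)`. -/
noncomputable def dqc1State {A B : Type*} [Fintype A] [Fintype B] [DecidableEq A]
    [DecidableEq B] (a : ℝ) (U : Matrix (A × B) (A × B) ℂ) :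
    Matrix (Fin 2 × (A × B)) (Fin 2 × (A × B)) ℂ :=
  (2 * (Fintype.card (A × B) : ℂ))⁻¹ •
    (1 + (a : ℂ) • (Matrix.single 0 1 1 ⊗ₖ Uᴴ + Matrix.single 1 0 1 ⊗ₖ U))

/-- Partial transpose of the DQC1 state over the part `B` (the part not containing the
special qubit). -/
def ptB {A B : Type*} (ρ : Matrix (Fin 2 × (A × B)) (Fin 2 × (A × B)) ℂ) :
    Matrix (Fin 2 × (A × B)) (Fin 2 × (A × B)) ℂ :=
  Matrix.of fun p q => ρ (p.1, (p.2.1, q.2.2)) (q.1, (q.2.1, p.2.2))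

/-- Partial transpose of an operator on `A × B` over the `B` factor. -/
def ptU {A B : Type*} (U : Matrix (A × B) (A × B) ℂ) : Matrix (A × B) (A × B) ℂ :=
  Matrix.of fun p q => U (p.1, q.2) (q.1, p.2)

/- Auxiliary lemmas -/

lemma kron_conjTranspose {m n p q : Type*} (X : Matrix m n ℂ) (Y : Matrix p q ℂ) :
    (X ⊗ₖ Y)ᴴ = Xᴴ ⊗ₖ Yᴴ := by
  ext i j
  simp [Matrix.conjTranspose_apply, Matrix.kroneckerMap_apply]

lemma trace_sq_eq_sum_eigenvalues_sq {n : Type*} [Fintype n] [DecidableEq n]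
    {M : Matrix n n ℂ} (hM : M.IsHermitian) :
    (M * M).trace = ((∑ i, hM.eigenvalues i ^ 2 : ℝ) : ℂ) := by
  set V : Matrix n n ℂ := (hM.eigenvectorUnitary : Matrix n n ℂ) with hVdef
  set D : Matrix n n ℂ := Matrix.diagonal (RCLike.ofReal ∘ hM.eigenvalues) with hDdef
  have hV : star V * V = 1 := Matrix.mem_unitaryGroup_iff'.mp hM.eigenvectorUnitary.2
  have hspec : M = V * D * star V := hM.spectral_theorem
  have h1 : M * M = V * (D * D) * star V := by
    rw [hspec]
    calc V * D * star V * (V * D * star V)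
        = V * D * (star V * V) * (D * star V) := by
          simp only [Matrix.mul_assoc]
      _ = V * (D * D) * star V := by
          rw [hV, Matrix.mul_one]; simp only [Matrix.mul_assoc]
  rw [h1, Matrix.trace_mul_comm, ← Matrix.mul_assoc, hV, Matrix.one_mul, hDdef,
    Matrix.diagonal_mul_diagonal, Matrix.trace_diagonal]
  push_cast
  simp [pow_two]

lemma ptB_isHermitian {A B : Type*} {ρ : Matrix (Fin 2 × (A × B)) (Fin 2 × (A × B)) ℂ}
    (hρ : ρ.IsHermitian) : (ptB ρ).IsHermitian := by
  ext p q
  simp only [Matrix.conjTranspose_apply, ptB, Matrix.of_apply]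
  exact hρ.apply _ _

lemma trace_ptB_mul_ptB {A B : Type*} [Fintype A] [Fintype B]
    (ρ : Matrix (Fin 2 × (A × B)) (Fin 2 × (A × B)) ℂ) :
    (ptB ρ * ptB ρ).trace = (ρ * ρ).trace := by
  classical
  have lhs : (ptB ρ * ptB ρ).trace =
      ∑ x : (Fin 2 × (A × B)) × (Fin 2 × (A × B)),
        ρ (x.1.1, (x.1.2.1, x.2.2.2)) (x.2.1, (x.2.2.1, x.1.2.2)) *
        ρ (x.2.1, (x.2.2.1, x.1.2.2)) (x.1.1, (x.1.2.1, x.2.2.2)) := by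
    rw [Fintype.sum_prod_type]
    simp [Matrix.trace, Matrix.diag, Matrix.mul_apply, ptB]
  have rhs : (ρ * ρ).trace =
      ∑ x : (Fin 2 × (A × B)) × (Fin 2 × (A × B)), ρ x.1 x.2 * ρ x.2 x.1 := by
    rw [Fintype.sum_prod_type]
    simp [Matrix.trace, Matrix.diag, Matrix.mul_apply]
  rw [lhs, rhs]
  have hinv : Function.Involutive
      (fun x : (Fin 2 × (A × B)) × (Fin 2 × (A × B)) =>
        (((x.1.1, (x.1.2.1, x.2.2.2)) : Fin 2 × (A × B)),
         ((x.2.1, (x.2.2.1, x.1.2.2)) : Fin 2 × (A × B)))) := by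
    rintro ⟨⟨i, a, b⟩, ⟨j, c, d⟩⟩; rfl
  exact Fintype.sum_bijective _ hinv.bijective _ _ (fun x => rfl)

lemma dqc1_isHermitian {A B : Type*} [Fintype A] [Fintype B] [DecidableEq A] [DecidableEq B]
    (a : ℝ) (U : Matrix (A × B) (A × B) ℂ) : (dqc1State a U).IsHermitian := by
  unfold dqc1State Matrix.IsHermitian
  rw [Matrix.conjTranspose_smul, Matrix.conjTranspose_add, Matrix.conjTranspose_one,
    Matrix.conjTranspose_smul, Matrix.conjTranspose_add, kron_conjTranspose,
    kron_conjTranspose, Matrix.conjTranspose_conjTranspose]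
  have h01 : ∀ i j : Fin 2, (Matrix.single i j (1 : ℂ))ᴴ = Matrix.single j i 1 := by
    intro i j
    ext k l
    simp [Matrix.conjTranspose_apply, Matrix.single, and_comm]
  rw [h01, h01,
    show star ((a : ℂ)) = (a : ℂ) by simp,
    show star ((2 * ((Fintype.card (A × B)) : ℂ))⁻¹)
        = (2 * ((Fintype.card (A × B)) : ℂ))⁻¹ by rw [star_inv₀]; simp]
  module

/-- For every `n`-qubit unitary `U`, every polarization `0 ≤ α ≤ 1` and every bipartite
division of the `n+1` qubits, the multiplicative negativity of the DQC1 output state is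
at most `√(1+α²)` (so at most `√2` for `α = 1`), independent of `n`. -/
theorem stmt_13 {A B : Type*} [Fintype A] [Fintype B] [DecidableEq A] [DecidableEq B]
    [Nonempty A] [Nonempty B]
    (a : ℝ) (h0 : 0 ≤ a) (h1 : a ≤ 1)
    (U : Matrix (A × B) (A × B) ℂ) (hU : Uᴴ * U = 1) :
    traceNorm (ptB (dqc1State a U)) ≤ Real.sqrt (1 + a ^ 2) := by
  classical
  set N : ℕ := Fintype.card (A × B) with hN
  have hNpos : 0 < N := Fintype.card_pos
  have hN0 : (2 * (N : ℂ)) ≠ 0 :=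
    mul_ne_zero two_ne_zero (Nat.cast_ne_zero.mpr hNpos.ne')
  -- trace of ρ² = (1+a²)/(2N)
  have hUU : U * Uᴴ = 1 := mul_eq_one_comm.mp hU
  have htr2 : ((dqc1State a U) * (dqc1State a U)).trace = (1 + (a : ℂ) ^ 2) / (2 * N) := by
    set V := Matrix.single (0 : Fin 2) (1 : Fin 2) (1 : ℂ) ⊗ₖ Uᴴ +
      Matrix.single (1 : Fin 2) (0 : Fin 2) (1 : ℂ) ⊗ₖ U with hVdef
    have htrV : V.trace = 0 := by
      simp [hVdef, Matrix.trace_add, Matrix.trace_kronecker,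
        Matrix.trace_single_eq_of_ne _ _ _ (by decide : (1 : Fin 2) ≠ 0),
        Matrix.trace_single_eq_of_ne _ _ _ (by decide : (0 : Fin 2) ≠ 1)]
    have htrV2 : (V * V).trace = 2 * N := by
      have hVV : V * V = Matrix.single (0 : Fin 2) (0 : Fin 2) (1 : ℂ) ⊗ₖ 1 +
          Matrix.single (1 : Fin 2) (1 : Fin 2) (1 : ℂ) ⊗ₖ 1 := by
        rw [hVdef, add_mul, mul_add, mul_add, ← Matrix.mul_kronecker_mul,
          ← Matrix.mul_kronecker_mul, ← Matrix.mul_kronecker_mul, ← Matrix.mul_kronecker_mul,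
          hU, hUU]
        have e1 : Matrix.single (0 : Fin 2) (1 : Fin 2) (1 : ℂ) *
            Matrix.single (0 : Fin 2) (1 : Fin 2) (1 : ℂ) = 0 :=
          Matrix.single_mul_single_of_ne _ _ _ _ (by decide) _
        have e2 : Matrix.single (1 : Fin 2) (0 : Fin 2) (1 : ℂ) *
            Matrix.single (1 : Fin 2) (0 : Fin 2) (1 : ℂ) = 0 :=
          Matrix.single_mul_single_of_ne _ _ _ _ (by decide) _
        have e3 : Matrix.single (0 : Fin 2) (1 : Fin 2) (1 : ℂ) *
            Matrix.single (1 : Fin 2) (0 : Fin 2) (1 : ℂ) =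
            Matrix.single (0 : Fin 2) (0 : Fin 2) (1 : ℂ) := by
          rw [Matrix.single_mul_single_same]; norm_num
        have e4 : Matrix.single (1 : Fin 2) (0 : Fin 2) (1 : ℂ) *
            Matrix.single (0 : Fin 2) (1 : Fin 2) (1 : ℂ) =
            Matrix.single (1 : Fin 2) (1 : Fin 2) (1 : ℂ) := by
          rw [Matrix.single_mul_single_same]; norm_num
        rw [e1, e2, e3, e4, Matrix.zero_kronecker, Matrix.zero_kronecker]
        abel
      rw [hVV]
      simp [Matrix.trace_add, Matrix.trace_kronecker, Matrix.trace_single_eq_same, hN]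
      ring
    have expand : (dqc1State a U) * (dqc1State a U) =
        ((2 * (N : ℂ))⁻¹ * (2 * (N : ℂ))⁻¹) •
          (1 + (a : ℂ) • V + (a : ℂ) • V + ((a : ℂ) * a) • (V * V)) := by
      unfold dqc1State
      rw [← hVdef, ← hN]
      rw [Matrix.smul_mul, Matrix.mul_smul, smul_smul]
      congr 1
      simp only [add_mul, mul_add, Matrix.one_mul, Matrix.mul_one, Matrix.smul_mul,
        Matrix.mul_smul, smul_smul]
      abel
    rw [expand]
    simp only [Matrix.trace_smul, Matrix.trace_add, htrV, htrV2, Matrix.trace_one,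
      smul_eq_mul, mul_zero, add_zero]
    have hcard : (Fintype.card (Fin 2 × (A × B)) : ℂ) = 2 * N := by
      rw [Fintype.card_prod, Fintype.card_fin, ← hN]; push_cast; ring
    rw [hcard]
    field_simp
  -- eigenvalue bookkeeping
  have hρH : (dqc1State a U).IsHermitian := dqc1_isHermitian a U
  have hH : (ptB (dqc1State a U)).IsHermitian := ptB_isHermitian hρH
  rw [traceNorm, dif_pos hH]
  have hsum_sq : (∑ i, hH.eigenvalues i ^ 2) = (1 + a ^ 2) / (2 * N) := by
    have h1 : ((∑ i, hH.eigenvalues i ^ 2 : ℝ) : ℂ) = (1 + (a : ℂ) ^ 2) / (2 * N) := by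
      rw [← trace_sq_eq_sum_eigenvalues_sq hH, trace_ptB_mul_ptB, htr2]
    have h2 : ((((1 + a ^ 2) / (2 * N)) : ℝ) : ℂ) = (1 + (a : ℂ) ^ 2) / (2 * N) := by
      push_cast; ring
    exact_mod_cast h1.trans h2.symm
  -- Cauchy–Schwarz
  have hcardR : (Fintype.card (Fin 2 × (A × B)) : ℝ) = 2 * N := by
    rw [Fintype.card_prod, Fintype.card_fin, ← hN]; push_cast; ring
  have cs : (∑ i, |hH.eigenvalues i|) ^ 2 ≤
      (Fintype.card (Fin 2 × (A × B)) : ℝ) * ∑ i, hH.eigenvalues i ^ 2 := by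
    have := Finset.sum_mul_sq_le_sq_mul_sq Finset.univ (fun _ => (1 : ℝ))
      (fun i => |hH.eigenvalues i|)
    simpa [sq_abs, Finset.card_univ] using this
  have hNR : (0 : ℝ) < 2 * N := by positivity
  have key : (∑ i, |hH.eigenvalues i|) ^ 2 ≤ 1 + a ^ 2 := by
    calc (∑ i, |hH.eigenvalues i|) ^ 2
        ≤ (Fintype.card (Fin 2 × (A × B)) : ℝ) * ∑ i, hH.eigenvalues i ^ 2 := cs
      _ = (2 * N) * ((1 + a ^ 2) / (2 * N)) := by rw [hcardR, hsum_sq]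
      _ = 1 + a ^ 2 := by field_simp
  have hnonneg : 0 ≤ ∑ i, |hH.eigenvalues i| :=
    Finset.sum_nonneg fun i _ => abs_nonneg _
  rw [show (∑ i, |hH.eigenvalues i|) = Real.sqrt ((∑ i, |hH.eigenvalues i|) ^ 2) by
    rw [Real.sqrt_sq hnonneg]]
  exact Real.sqrt_le_sqrt key
end

section
/- For the three-qubit DQC1 state built from the specific two-qubit unitary U_2 with blocks A_1 = |1⟩⟨1|, B_1 = |0⟩⟨0|, C_1 = |0⟩⟨1|, D_1 = |1⟩⟨0|, the spectrum of the partial transpose ρ̆_3(α) is (1/8)(1+2α, 1, 1, 1, 1, 1, 1, 1−2α), so the multiplicative negativity is 1 for α ≤ 1/2 and (2α+3)/4 for α ≥ 1/2 (equal to 5/4 at α = 1). -/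
open Matrix Kronecker

/-- The specific two-qubit unitary `U₂` with blocks `A₁ = |1⟩⟨1|`, `B₁ = |0⟩⟨0|`,
`C₁ = |0⟩⟨1|`, `D₁ = |1⟩⟨0|`: `U₂ = [[A₁, C₁],[D₁, B₁]]`. -/
noncomputable def U2 : Matrix (Fin 2 × Fin 2) (Fin 2 × Fin 2) ℂ :=
  Matrix.single 0 0 1 ⊗ₖ Matrix.single 1 1 1 +
  Matrix.single 0 1 1 ⊗ₖ Matrix.single 0 1 1 +
  Matrix.single 1 0 1 ⊗ₖ Matrix.single 1 0 1 +
  Matrix.single 1 1 1 ⊗ₖ Matrix.single 0 0 1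

/-! ### Auxiliary general lemmas -/

open Polynomial Finset in
lemma aux_charpoly_conj' {m : Type*} [Fintype m] [DecidableEq m] (P Q A : Matrix m m ℂ)
    (hPQ : P * Q = 1) : (P * A * Q).charpoly = A.charpoly := by
  have hmap : ∀ (B C : Matrix m m ℂ), (B * C).map (Polynomial.C : ℂ →+* ℂ[X]) =
      B.map Polynomial.C * C.map Polynomial.C := fun B C => Matrix.map_mul
  have hone : (1 : Matrix m m ℂ).map (Polynomial.C : ℂ →+* ℂ[X]) = 1 :=
    Matrix.map_one _ (map_zero _) (map_one _)
  have hc : charmatrix (P * A * Q) =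
      (P.map (Polynomial.C : ℂ →+* ℂ[X])) * charmatrix A * (Q.map Polynomial.C) := by
    unfold charmatrix
    simp only [RingHom.mapMatrix_apply]
    rw [Matrix.mul_sub, Matrix.sub_mul]
    congr 1
    · rw [scalar_apply, ← Matrix.smul_one_eq_diagonal, Matrix.mul_smul, Matrix.smul_mul, mul_one,
        ← hmap, hPQ, hone]
    · rw [← hmap, ← hmap, Matrix.mul_assoc]
  rw [Matrix.charpoly, Matrix.charpoly, hc, det_mul, det_mul, mul_right_comm, ← det_mul,
    ← hmap, hPQ, hone, det_one, one_mul]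

open Polynomial in
lemma aux_charpoly_diagonal {m : Type*} [Fintype m] [DecidableEq m] (v : m → ℂ) :
    (Matrix.diagonal v).charpoly = ∏ i, (X - Polynomial.C (v i)) := by
  have : charmatrix (Matrix.diagonal v) = Matrix.diagonal fun i => X - Polynomial.C (v i) := by
    ext i j
    by_cases h : i = j
    · subst h; simp
    · rw [charmatrix_apply_ne _ _ _ h, Matrix.diagonal_apply_ne _ h, Matrix.diagonal_apply_ne _ h]
      simp
  rw [Matrix.charpoly, this, det_diagonal]

open Classical in
lemma aux_card_fiber_key {δ γ : Type*} [Fintype δ] (f : δ → γ) (c : γ) :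
    Fintype.card {x : δ // f x = c} = Multiset.count c (Finset.univ.val.map f) := by
  classical
  rw [Multiset.count_map, Fintype.card_subtype, Finset.card_def, Finset.filter_val]
  exact congrArg _ (Multiset.filter_congr fun x _ => by simp [eq_comm])

lemma aux_exists_comp_equiv {α β γ : Type*} [Fintype α] [Fintype β] (f : α → γ) (g : β → γ)
    (h : Finset.univ.val.map f = Finset.univ.val.map g) :
    ∃ e : α ≃ β, ∀ i, f i = g (e i) := by
  classical
  have hcard : ∀ c, Fintype.card {x : α // f x = c} = Fintype.card {y : β // g y = c} := by
    intro c; rw [aux_card_fiber_key f c, aux_card_fiber_key g c, h]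
  refine ⟨Equiv.ofFiberEquiv (fun c => Fintype.equivOfCardEq (hcard c)), fun i => ?_⟩
  exact (Equiv.ofFiberEquiv_map _ i).symm

/-! ### Structure of the partially transposed state -/

lemma ptB_smul {A B : Type*} (x : ℂ) (ρ : Matrix (Fin 2 × (A × B)) (Fin 2 × (A × B)) ℂ) :
    ptB (x • ρ) = x • ptB ρ := rfl

lemma ptB_add {A B : Type*} (ρ τ : Matrix (Fin 2 × (A × B)) (Fin 2 × (A × B)) ℂ) :
    ptB (ρ + τ) = ptB ρ + ptB τ := rfl

lemma ptB_kron {A B : Type*} (E : Matrix (Fin 2) (Fin 2) ℂ) (W : Matrix (A × B) (A × B) ℂ) :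
    ptB (E ⊗ₖ W) = E ⊗ₖ ptU W := rfl

lemma ptB_one {A B : Type*} [DecidableEq A] [DecidableEq B] :
    ptB (1 : Matrix (Fin 2 × (A × B)) (Fin 2 × (A × B)) ℂ) = 1 := by
  ext ⟨c, x, y⟩ ⟨c', x', y'⟩
  simp [ptB, Matrix.one_apply, Prod.ext_iff, and_assoc, eq_comm (a := y)]

def Vm : Matrix (Fin 2 × Fin 2) (Fin 2 × Fin 2) ℂ :=
  Matrix.of fun p q => if (p = (0,1) ∨ p = (1,0)) ∧ (q = (0,1) ∨ q = (1,0)) then 1 else 0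

lemma hptU2 : ptU U2 = Vm := by
  ext ⟨x, y⟩ ⟨x', y'⟩
  fin_cases x <;> fin_cases y <;> fin_cases x' <;> fin_cases y' <;>
    simp [ptU, U2, Vm, Matrix.single, Prod.ext_iff]

lemma hptU2c : ptU U2ᴴ = Vm := by
  ext ⟨x, y⟩ ⟨x', y'⟩
  fin_cases x <;> fin_cases y <;> fin_cases x' <;> fin_cases y' <;>
    simp [ptU, U2, Vm, Matrix.single, Prod.ext_iff]

def Xm : Matrix (Fin 2) (Fin 2) ℂ := !![0,1;1,0]

lemma hMform (a : ℝ) :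
    ptB (dqc1State a U2) = (8:ℂ)⁻¹ • (1 + (a:ℂ) • (Xm ⊗ₖ Vm)) := by
  rw [dqc1State, ptB_smul, ptB_add, ptB_smul, ptB_add, ptB_kron, ptB_kron, ptB_one,
    hptU2, hptU2c]
  have hX : Matrix.single (0 : Fin 2) (1 : Fin 2) (1:ℂ) ⊗ₖ Vm
      + Matrix.single (1 : Fin 2) (0 : Fin 2) (1:ℂ) ⊗ₖ Vm = Xm ⊗ₖ Vm := by
    rw [← Matrix.add_kronecker]
    ext i j
    fin_cases i <;> fin_cases j <;> simp [Xm, Matrix.single]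
  rw [hX]
  norm_num

/-! ### Explicit diagonalization -/

def P1 : Matrix (Fin 2) (Fin 2) ℂ := !![1,1;1,-1]
noncomputable def Q1 : Matrix (Fin 2) (Fin 2) ℂ := !![1/2,1/2;1/2,-1/2]
def D1v : Fin 2 → ℂ := ![1,-1]

def P2 : Matrix (Fin 2 × Fin 2) (Fin 2 × Fin 2) ℂ :=
  Matrix.of fun p q =>
    if q = (0,1) then (if p = (0,1) ∨ p = (1,0) then 1 else 0)
    else if q = (1,0) then (if p = (0,1) then 1 else if p = (1,0) then -1 else 0)
    else (if p = q then 1 else 0)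

noncomputable def Q2 : Matrix (Fin 2 × Fin 2) (Fin 2 × Fin 2) ℂ :=
  Matrix.of fun p q =>
    if p = (0,1) then (if q = (0,1) ∨ q = (1,0) then 1/2 else 0)
    else if p = (1,0) then (if q = (0,1) then 1/2 else if q = (1,0) then -1/2 else 0)
    else (if p = q then 1 else 0)

def D2v : Fin 2 × Fin 2 → ℂ := fun q => if q = (0,1) then 2 else 0

lemma hXP : Xm * P1 = P1 * Matrix.diagonal D1v := by
  ext i j
  fin_cases i <;> fin_cases j <;>
    simp [Xm, P1, D1v, Matrix.mul_apply, Fin.sum_univ_two, Matrix.diagonal_apply]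

lemma hP1Q1 : P1 * Q1 = 1 := by
  ext i j
  fin_cases i <;> fin_cases j <;>
    simp [P1, Q1, Matrix.mul_apply, Fin.sum_univ_two, Matrix.one_apply] <;> norm_num

lemma hVP : Vm * P2 = P2 * Matrix.diagonal D2v := by
  ext ⟨x, y⟩ ⟨x', y'⟩
  fin_cases x <;> fin_cases y <;> fin_cases x' <;> fin_cases y' <;>
    simp [Vm, P2, D2v, Matrix.mul_apply, Fintype.sum_prod_type, Fin.sum_univ_two,
      Matrix.diagonal_apply, Prod.ext_iff] <;> norm_num

lemma hP2Q2 : P2 * Q2 = 1 := by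
  ext ⟨x, y⟩ ⟨x', y'⟩
  fin_cases x <;> fin_cases y <;> fin_cases x' <;> fin_cases y' <;>
    simp [P2, Q2, Matrix.mul_apply, Fintype.sum_prod_type, Fin.sum_univ_two,
      Matrix.one_apply, Prod.ext_iff] <;> norm_num

noncomputable def dv (a : ℝ) : Fin 2 × (Fin 2 × Fin 2) → ℝ := fun p =>
  if p = (0,(0,1)) then (1+2*a)/8 else if p = (1,(0,1)) then (1-2*a)/8 else 1/8

lemma hdvC (a : ℝ) (i : Fin 2 × (Fin 2 × Fin 2)) :
    (8:ℂ)⁻¹ * (1 + (a:ℂ) * (D1v i.1 * D2v i.2)) = ((dv a i : ℝ) : ℂ) := by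
  obtain ⟨c, x, y⟩ := i
  fin_cases c <;> fin_cases x <;> fin_cases y <;>
    simp [D1v, D2v, dv, Prod.ext_iff] <;> push_cast <;> ring

lemma hMP2 (a : ℝ) (M : Matrix (Fin 2 × (Fin 2 × Fin 2)) (Fin 2 × (Fin 2 × Fin 2)) ℂ)
    (hM : M = (8:ℂ)⁻¹ • (1 + (a:ℂ) • (Xm ⊗ₖ Vm))) :
    M * (P1 ⊗ₖ P2) = (P1 ⊗ₖ P2) * Matrix.diagonal (fun i => ((dv a i : ℝ) : ℂ)) := by
  have hdd : Matrix.diagonal D1v ⊗ₖ Matrix.diagonal D2v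
      = Matrix.diagonal fun i : Fin 2 × (Fin 2 × Fin 2) => D1v i.1 * D2v i.2 :=
    Matrix.diagonal_kronecker_diagonal _ _
  have hK : (Xm ⊗ₖ Vm) * (P1 ⊗ₖ P2)
      = (P1 ⊗ₖ P2) * Matrix.diagonal fun i : Fin 2 × (Fin 2 × Fin 2) => D1v i.1 * D2v i.2 := by
    rw [← Matrix.mul_kronecker_mul, hXP, hVP, Matrix.mul_kronecker_mul, hdd]
  have hdiag : (8:ℂ)⁻¹ • ((1 : Matrix (Fin 2 × (Fin 2 × Fin 2)) (Fin 2 × (Fin 2 × Fin 2)) ℂ)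
      + (a:ℂ) • Matrix.diagonal (fun i : Fin 2 × (Fin 2 × Fin 2) => D1v i.1 * D2v i.2))
      = Matrix.diagonal (fun i => ((dv a i : ℝ) : ℂ)) := by
    ext i j
    rcases eq_or_ne i j with rfl | h
    · simp only [Matrix.add_apply, Matrix.smul_apply, Matrix.diagonal_apply_eq,
        Matrix.one_apply_eq, smul_eq_mul]
      rw [← hdvC a i]
    · simp [Matrix.diagonal_apply_ne _ h, Matrix.one_apply_ne h]
  rw [hM, Matrix.smul_mul, Matrix.add_mul, Matrix.one_mul, Matrix.smul_mul, hK,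
    ← hdiag, Matrix.mul_smul, Matrix.mul_add, Matrix.mul_one, Matrix.mul_smul]

lemma hPQkron : (P1 ⊗ₖ P2) * (Q1 ⊗ₖ Q2) = 1 := by
  rw [← Matrix.mul_kronecker_mul, hP1Q1, hP2Q2, Matrix.one_kronecker_one]

def eFin8 : (Fin 2 × (Fin 2 × Fin 2)) ≃ Fin 8 where
  toFun p := if p = (0,(0,1)) then 0 else if p = (1,(0,1)) then 7 else
    if p = (0,(0,0)) then 1 else if p = (0,(1,0)) then 2 else if p = (0,(1,1)) then 3 else
    if p = (1,(0,0)) then 4 else if p = (1,(1,0)) then 5 else 6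
  invFun k := if k = 0 then (0,(0,1)) else if k = 7 then (1,(0,1)) else
    if k = 1 then (0,(0,0)) else if k = 2 then (0,(1,0)) else if k = 3 then (0,(1,1)) else
    if k = 4 then (1,(0,0)) else if k = 5 then (1,(1,0)) else (1,(1,1))
  left_inv := by decide
  right_inv := by decide

lemma hdl (a : ℝ) (p : Fin 2 × (Fin 2 × Fin 2)) :
    dv a p = ![(1 + 2*a)/8, 1/8, 1/8, 1/8, 1/8, 1/8, 1/8, (1 - 2*a)/8] (eFin8 p) := by
  obtain ⟨c, x, y⟩ := p
  fin_cases c <;> fin_cases x <;> fin_cases y <;>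
    first
      | rfl
      | (simp [dv, eFin8, Prod.ext_iff] <;> first | rfl | norm_num)

open Polynomial in
lemma eig_eq (a : ℝ) (hh : (ptB (dqc1State a U2)).IsHermitian) :
    ∃ σ : (Fin 2 × (Fin 2 × Fin 2)) ≃ Fin 8,
      ∀ i, hh.eigenvalues i =
        ![(1 + 2*a)/8, 1/8, 1/8, 1/8, 1/8, 1/8, 1/8, (1 - 2*a)/8] (σ i) := by
  classical
  have hPQ : (P1 ⊗ₖ P2) * (Q1 ⊗ₖ Q2) = 1 := hPQkron
  have hfac : ptB (dqc1State a U2) =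
      (P1 ⊗ₖ P2) * Matrix.diagonal (fun i => ((dv a i : ℝ) : ℂ)) * (Q1 ⊗ₖ Q2) := by
    calc ptB (dqc1State a U2) = ptB (dqc1State a U2) * ((P1 ⊗ₖ P2) * (Q1 ⊗ₖ Q2)) := by
          rw [hPQ, mul_one]
    _ = (ptB (dqc1State a U2) * (P1 ⊗ₖ P2)) * (Q1 ⊗ₖ Q2) := by rw [mul_assoc]
    _ = _ := by rw [hMP2 a _ (hMform a)]
  have hcp1 : (ptB (dqc1State a U2)).charpoly = ∏ i, (X - Polynomial.C ((dv a i : ℝ) : ℂ)) := by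
    rw [hfac, aux_charpoly_conj' _ _ _ hPQ, aux_charpoly_diagonal]
  have hU : (hh.eigenvectorUnitary : Matrix (Fin 2 × (Fin 2 × Fin 2)) (Fin 2 × (Fin 2 × Fin 2)) ℂ) *
      star (hh.eigenvectorUnitary : Matrix (Fin 2 × (Fin 2 × Fin 2)) (Fin 2 × (Fin 2 × Fin 2)) ℂ)
      = 1 := Matrix.mem_unitaryGroup_iff.mp hh.eigenvectorUnitary.2
  have hcp2 : (ptB (dqc1State a U2)).charpoly =
      ∏ i, (X - Polynomial.C ((hh.eigenvalues i : ℝ) : ℂ)) := by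
    conv_lhs => rw [hh.spectral_theorem]
    rw [Unitary.conjStarAlgAut_apply, aux_charpoly_conj' _ _ _ hU, aux_charpoly_diagonal]
    rfl
  have hprod : ∏ i, (X - Polynomial.C ((hh.eigenvalues i : ℝ) : ℂ)) =
      ∏ i, (X - Polynomial.C ((dv a i : ℝ) : ℂ)) := hcp2.symm.trans hcp1
  have key : ∀ (f : (Fin 2 × (Fin 2 × Fin 2)) → ℂ),
      (∏ i, (X - Polynomial.C (f i))).roots = Finset.univ.val.map f := by
    intro f
    rw [Finset.prod_eq_multiset_prod,
      show (fun i => X - Polynomial.C (f i)) = (fun c => X - Polynomial.C c) ∘ f from rfl,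
      ← Multiset.map_map, Polynomial.roots_multiset_prod_X_sub_C]
  have hroots := congrArg Polynomial.roots hprod
  rw [key, key] at hroots
  have hsplit : ∀ (g : (Fin 2 × (Fin 2 × Fin 2)) → ℝ),
      Finset.univ.val.map (fun i => ((g i : ℝ) : ℂ)) =
        (Finset.univ.val.map g).map Complex.ofReal := by
    intro g; rw [Multiset.map_map]; rfl
  rw [hsplit, hsplit] at hroots
  have hms : Finset.univ.val.map hh.eigenvalues = Finset.univ.val.map (dv a) :=
    Multiset.map_injective Complex.ofReal_injective hroots
  obtain ⟨σ0, hσ0⟩ := aux_exists_comp_equiv hh.eigenvalues (dv a) hms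
  exact ⟨σ0.trans eFin8, fun i => by rw [hσ0 i, hdl a (σ0 i)]; rfl⟩

/-- For the three-qubit DQC1 state built from `U₂`, the spectrum of the partial transpose
(across the split separating the two unpolarized qubits) is
`(1/8)(1+2α, 1, 1, 1, 1, 1, 1, 1−2α)`; hence the multiplicative negativity is `1` for
`α ≤ 1/2` and `(2α+3)/4` for `α ≥ 1/2` (equal to `5/4` at `α = 1`). -/
theorem stmt_14 (a : ℝ) (h0 : 0 ≤ a) (h1 : a ≤ 1)
    (hh : (ptB (dqc1State a U2)).IsHermitian) :
    (∃ σ : (Fin 2 × (Fin 2 × Fin 2)) ≃ Fin 8,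
        ∀ i, hh.eigenvalues i =
          ![(1 + 2*a)/8, 1/8, 1/8, 1/8, 1/8, 1/8, 1/8, (1 - 2*a)/8] (σ i)) ∧
    (a ≤ 1/2 → traceNorm (ptB (dqc1State a U2)) = 1) ∧
    (1/2 ≤ a → traceNorm (ptB (dqc1State a U2)) = (2*a + 3)/4) := by
  obtain ⟨σ, hσ⟩ := eig_eq a hh
  have htr : traceNorm (ptB (dqc1State a U2)) =
      ∑ j : Fin 8, |![(1 + 2*a)/8, 1/8, 1/8, 1/8, 1/8, 1/8, 1/8, (1 - 2*a)/8] j| := by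
    rw [traceNorm, dif_pos hh]
    rw [show (∑ i, |hh.eigenvalues i|) =
        ∑ i, |![(1 + 2*a)/8, 1/8, 1/8, 1/8, 1/8, 1/8, 1/8, (1 - 2*a)/8] (σ i)| from
      Finset.sum_congr rfl fun i _ => by rw [hσ i]]
    exact Equiv.sum_comp σ (fun j => |![(1 + 2*a)/8, 1/8, 1/8, 1/8, 1/8, 1/8, 1/8, (1 - 2*a)/8] j|)
  refine ⟨⟨σ, hσ⟩, ?_, ?_⟩
  · intro ha
    rw [htr, Fin.sum_univ_eight,
      show (![(1 + 2*a)/8, 1/8, 1/8, 1/8, 1/8, 1/8, 1/8, (1 - 2*a)/8] : Fin 8 → ℝ) 0 = (1 + 2*a)/8 from rfl,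
      show (![(1 + 2*a)/8, 1/8, 1/8, 1/8, 1/8, 1/8, 1/8, (1 - 2*a)/8] : Fin 8 → ℝ) 1 = 1/8 from rfl,
      show (![(1 + 2*a)/8, 1/8, 1/8, 1/8, 1/8, 1/8, 1/8, (1 - 2*a)/8] : Fin 8 → ℝ) 2 = 1/8 from rfl,
      show (![(1 + 2*a)/8, 1/8, 1/8, 1/8, 1/8, 1/8, 1/8, (1 - 2*a)/8] : Fin 8 → ℝ) 3 = 1/8 from rfl,
      show (![(1 + 2*a)/8, 1/8, 1/8, 1/8, 1/8, 1/8, 1/8, (1 - 2*a)/8] : Fin 8 → ℝ) 4 = 1/8 from rfl,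
      show (![(1 + 2*a)/8, 1/8, 1/8, 1/8, 1/8, 1/8, 1/8, (1 - 2*a)/8] : Fin 8 → ℝ) 5 = 1/8 from rfl,
      show (![(1 + 2*a)/8, 1/8, 1/8, 1/8, 1/8, 1/8, 1/8, (1 - 2*a)/8] : Fin 8 → ℝ) 6 = 1/8 from rfl,
      show (![(1 + 2*a)/8, 1/8, 1/8, 1/8, 1/8, 1/8, 1/8, (1 - 2*a)/8] : Fin 8 → ℝ) 7 = (1 - 2*a)/8 from rfl,
      abs_of_nonneg (by linarith : (0:ℝ) ≤ (1 + 2*a)/8),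
      abs_of_nonneg (by linarith : (0:ℝ) ≤ (1 - 2*a)/8),
      show |(1:ℝ)/8| = 1/8 from abs_of_nonneg (by norm_num)]
    ring
  · intro ha
    rw [htr, Fin.sum_univ_eight,
      show (![(1 + 2*a)/8, 1/8, 1/8, 1/8, 1/8, 1/8, 1/8, (1 - 2*a)/8] : Fin 8 → ℝ) 0 = (1 + 2*a)/8 from rfl,
      show (![(1 + 2*a)/8, 1/8, 1/8, 1/8, 1/8, 1/8, 1/8, (1 - 2*a)/8] : Fin 8 → ℝ) 1 = 1/8 from rfl,
      show (![(1 + 2*a)/8, 1/8, 1/8, 1/8, 1/8, 1/8, 1/8, (1 - 2*a)/8] : Fin 8 → ℝ) 2 = 1/8 from rfl,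
      show (![(1 + 2*a)/8, 1/8, 1/8, 1/8, 1/8, 1/8, 1/8, (1 - 2*a)/8] : Fin 8 → ℝ) 3 = 1/8 from rfl,
      show (![(1 + 2*a)/8, 1/8, 1/8, 1/8, 1/8, 1/8, 1/8, (1 - 2*a)/8] : Fin 8 → ℝ) 4 = 1/8 from rfl,
      show (![(1 + 2*a)/8, 1/8, 1/8, 1/8, 1/8, 1/8, 1/8, (1 - 2*a)/8] : Fin 8 → ℝ) 5 = 1/8 from rfl,
      show (![(1 + 2*a)/8, 1/8, 1/8, 1/8, 1/8, 1/8, 1/8, (1 - 2*a)/8] : Fin 8 → ℝ) 6 = 1/8 from rfl,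
      show (![(1 + 2*a)/8, 1/8, 1/8, 1/8, 1/8, 1/8, 1/8, (1 - 2*a)/8] : Fin 8 → ℝ) 7 = (1 - 2*a)/8 from rfl,
      abs_of_nonneg (by linarith : (0:ℝ) ≤ (1 + 2*a)/8),
      abs_of_nonpos (by linarith : (1 - 2*a)/8 ≤ 0),
      show |(1:ℝ)/8| = 1/8 from abs_of_nonneg (by norm_num)]
    ring
end
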